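/- arXiv:2512.15509 — 2 statements merged into one kernel-verified Lean document; each statement's English description precedes it below -/
import Mathlib

section
/- Define a chain complex C of abelian groups indexed by ℕ with C_n = ℤ for all n, where the differential C_{2n} → C_{2n-1} is multiplication by n (for n ≥ 1) and the differential C_{2n+1} → C_{2n} is zero. Then this is a chain complex (d² = 0), and its homology satisfies: H_0(C) ≅ ℤ, H_{2n-1}(C) ≅ ℤ/n for all n ≥ 1, and H_{2n}(C) = 0 for all n ≥ 1. -/
open CategoryTheory CategoryTheory.Limits

/-- The chain complex `C` with `C_n = ℤ` for all `n`, where the differential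
`C_{2n} → C_{2n-1}` is multiplication by `n` and `C_{2n+1} → C_{2n}` is zero.
(The differential out of degree `j+1` is nonzero exactly when `j` is odd,
in which case `j+1 = 2m` with `m = (j+1)/2`.) -/
noncomputable def stmt7Complex : ChainComplex (ModuleCat ℤ) ℕ :=
  ChainComplex.of (fun _ => ModuleCat.of ℤ ℤ)
    (fun j => if j % 2 = 1 then
        ModuleCat.ofHom ((((j + 1) / 2 : ℕ) : ℤ) • (LinearMap.id : ℤ →ₗ[ℤ] ℤ)) else 0)
    (by
      intro j
      try dsimp only
      rcases Nat.even_or_odd j with h | h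
      · have h0 := Nat.even_iff.mp h
        rw [if_neg (show ¬ j % 2 = 1 by omega)]
        simp
      · have h1 := Nat.odd_iff.mp h
        rw [if_neg (show ¬ (j + 1) % 2 = 1 by omega)]
        simp)


/-- Convert an `AddMonoidHom` to a `ℤ`-linear map using the ambient module instances. -/
def addHomToLin {M N : Type*} [AddCommGroup M] [AddCommGroup N] [Module ℤ M] [Module ℤ N]
    (f : M →+ N) : M →ₗ[ℤ] N where
  toFun := f
  map_add' := f.map_add
  map_smul' z x :=
    ((congrArg f (Int.cast_smul_eq_zsmul ℤ z x)).trans (map_zsmul f z x)).trans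
      (Int.cast_smul_eq_zsmul ℤ z (f x)).symm

@[simp] lemma addHomToLin_apply {M N : Type*} [AddCommGroup M] [AddCommGroup N]
    [Module ℤ M] [Module ℤ N] (f : M →+ N) (x : M) : addHomToLin f x = f x := rfl

/-- The short complex `ℤ --·n--> ℤ --0--> ℤ`. -/
noncomputable def mulSC (n : ℕ) : ShortComplex (ModuleCat ℤ) :=
  ShortComplex.mk (ModuleCat.ofHom (((n : ℕ) : ℤ) • (LinearMap.id : ℤ →ₗ[ℤ] ℤ)))
    (0 : ModuleCat.of ℤ ℤ ⟶ ModuleCat.of ℤ ℤ) (by simp)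

noncomputable def zmodCofork (n : ℕ) : CokernelCofork (mulSC n).f :=
  CokernelCofork.ofπ (Z := ModuleCat.of ℤ (ZMod n))
    (ModuleCat.ofHom (@addHomToLin ℤ (ZMod n) _ _ _ _ (Int.castAddHom (ZMod n))))
    (by
      apply ModuleCat.hom_ext; apply LinearMap.ext; intro x
      show ((((n : ℤ) * (show ℤ from x)) : ℤ) : ZMod n) = 0
      rw [Int.cast_mul, Int.cast_natCast, ZMod.natCast_self, zero_mul])

lemma cofork_pi_n (n : ℕ) (s : Cofork (mulSC n).f 0) : s.π ((n : ℕ) : ℤ) = 0 := by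
  have h1 : s.π ((n : ℤ) • (1 : ℤ)) = 0 :=
    congrArg (fun (f : (mulSC n).X₁ ⟶ s.pt) => f (1 : ℤ)) (CokernelCofork.condition s)
  rw [smul_eq_mul, mul_one] at h1
  exact h1

/-- The underlying `AddMonoidHom` of the map out of the cofork point. -/
noncomputable def zmodDescHom (n : ℕ) (s : Cofork (mulSC n).f 0) : ℤ →+ ↑s.pt :=
  AddMonoidHom.mk' (fun x => s.π x) (map_add s.π.hom)

noncomputable def zmodDesc (n : ℕ) (s : Cofork (mulSC n).f 0) :
    ((zmodCofork n).pt ⟶ s.pt) :=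
  ModuleCat.ofHom (@addHomToLin (ZMod n) ↑s.pt _ _ _ s.pt.isModule
    (ZMod.lift n ⟨zmodDescHom n s, cofork_pi_n n s⟩))

noncomputable def zmodCoforkIsColimit (n : ℕ) : IsColimit (zmodCofork n) := by
  refine Cofork.IsColimit.mk _ (fun s => zmodDesc n s) (fun s => ?_) (fun s m hm => ?_)
  · apply ModuleCat.hom_ext; apply LinearMap.ext; intro x
    exact ZMod.lift_coe n ⟨zmodDescHom n s, cofork_pi_n n s⟩ x
  · ext z
    obtain ⟨x, rfl⟩ := ZMod.intCast_surjective z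
    have h2 := congrArg (fun (f : (mulSC n).X₂ ⟶ s.pt) => f x) hm
    exact h2.trans (ZMod.lift_coe n ⟨zmodDescHom n s, cofork_pi_n n s⟩ x).symm

/-- homology of mulSC is ZMod n -/
noncomputable def mulSCHomologyIso (n : ℕ) :
    (mulSC n).homology ≅ ModuleCat.of ℤ (ZMod n) :=
  (ShortComplex.LeftHomologyData.ofIsColimitCokernelCofork (mulSC n) rfl
    (zmodCofork n) (zmodCoforkIsColimit n)).homologyIso

lemma stmt7_d (j : ℕ) : stmt7Complex.d (j+1) j =
    (if j % 2 = 1 then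
      ModuleCat.ofHom ((((j + 1) / 2 : ℕ) : ℤ) • (LinearMap.id : ℤ →ₗ[ℤ] ℤ)) else 0) := by
  unfold stmt7Complex
  exact ChainComplex.of_d (fun _ => ModuleCat.of ℤ ℤ) (fun j => if j % 2 = 1 then
    ModuleCat.ofHom ((((j + 1) / 2 : ℕ) : ℤ) • (LinearMap.id : ℤ →ₗ[ℤ] ℤ)) else 0) j

lemma stmt7_d_even (j : ℕ) (h : j % 2 = 0) : stmt7Complex.d (j+1) j = 0 := by
  rw [stmt7_d, if_neg (by omega)]
  rfl

lemma stmt7_d_odd (m : ℕ) :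
    stmt7Complex.d (2*m+2) (2*m+1) =
      ModuleCat.ofHom (((m+1 : ℕ) : ℤ) • (LinearMap.id : ℤ →ₗ[ℤ] ℤ)) := by
  rw [show (2*m+2) = (2*m+1)+1 from by omega, stmt7_d, if_pos (by omega)]
  congr 2
  omega

theorem stmt7_homology :
    Nonempty (stmt7Complex.homology 0 ≅ ModuleCat.of ℤ ℤ) ∧
    (∀ n : ℕ, 1 ≤ n → Nonempty (stmt7Complex.homology (2 * n - 1) ≅ ModuleCat.of ℤ (ZMod n))) ∧
    (∀ n : ℕ, 1 ≤ n → IsZero (stmt7Complex.homology (2 * n))) := by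
  refine ⟨?_, ?_, ?_⟩
  · -- H₀ ≅ ℤ
    have hf : (stmt7Complex.sc' 1 0 0).f = 0 := stmt7_d_even 0 rfl
    have hg : (stmt7Complex.sc' 1 0 0).g = 0 :=
      stmt7Complex.shape 0 0 (by simp [ComplexShape.down])
    exact ⟨stmt7Complex.homologyIsoSc' 1 0 0 (by rw [ChainComplex.prev]; omega) ChainComplex.next_nat_zero
      ≪≫ (ShortComplex.LeftHomologyData.ofZeros _ hf hg).homologyIso⟩
  · -- H_{2n-1} ≅ ZMod n
    intro n hn
    obtain ⟨m, rfl⟩ : ∃ m, n = m + 1 := ⟨n - 1, by omega⟩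
    rw [show 2 * (m+1) - 1 = 2*m+1 from by omega]
    refine ⟨stmt7Complex.homologyIsoSc' (2*m+2) (2*m+1) (2*m)
      (by rw [ChainComplex.prev]; omega) (ChainComplex.next_nat_succ _) ≪≫
      ShortComplex.homologyMapIso ?_ ≪≫ mulSCHomologyIso (m+1)⟩
    refine ShortComplex.isoMk (Iso.refl _) (Iso.refl _) (Iso.refl _) ?_ ?_
    · simp only [Iso.refl_hom, CategoryTheory.Category.id_comp, CategoryTheory.Category.comp_id]
      exact (stmt7_d_odd m).symm
    · simp only [Iso.refl_hom, CategoryTheory.Category.id_comp, CategoryTheory.Category.comp_id]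
      exact (stmt7_d_even (2*m) (by omega)).symm
  · -- H_{2n} = 0
    intro n hn
    obtain ⟨m, rfl⟩ : ∃ m, n = m + 1 := ⟨n - 1, by omega⟩
    rw [show 2 * (m+1) = 2*m+2 from by omega]
    refine IsZero.of_iso ?_ (stmt7Complex.homologyIsoSc' (2*m+3) (2*m+2) (2*m+1)
      (by rw [ChainComplex.prev]; omega) (ChainComplex.next_nat_succ _))
    rw [← ShortComplex.exact_iff_isZero_homology, ShortComplex.moduleCat_exact_iff]
    intro x hx
    have hg : (stmt7Complex.sc' (2*m+3) (2*m+2) (2*m+1)).g =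
        ModuleCat.ofHom (((m+1 : ℕ) : ℤ) • (LinearMap.id : ℤ →ₗ[ℤ] ℤ)) := stmt7_d_odd m
    rw [hg] at hx
    change ℤ at x
    have hx' : ((m+1 : ℕ) : ℤ) * x = 0 := hx
    have hx0 : x = 0 := by
      rcases mul_eq_zero.mp hx' with h | h
      · exfalso
        have : (m+1 : ℕ) = 0 := by exact_mod_cast h
        omega
      · exact h
    refine ⟨0, ?_⟩
    rw [map_zero, hx0]
    rfl
end

section
/- Define a chain complex D of abelian groups indexed by ℕ with D_{2n} = ℤ for all n ≥ 0, D_{2n+3} = ℤ for all n ≥ 0, D_1 = 0, and with the only nonzero differentials D_{2n+3} → D_{2n+2} given by multiplication by n+1. Then H_0(D) ≅ ℤ, H_{2m}(D) ≅ ℤ/m for all m ≥ 1, and H_j(D) = 0 for all odd j. -/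
open CategoryTheory CategoryTheory.Limits

/-- The graded abelian groups of the complex `D`: `D_j = ℤ` for `j ≠ 1` (recall `ZMod 0 = ℤ`)
and `D_1 = 0` (as `ZMod 1` is trivial).  Thus `D_{2n} = ℤ` for `n ≥ 0` and
`D_{2n+3} = ℤ` for `n ≥ 0`, while `D_1 = 0`. -/
noncomputable def stmt8X (j : ℕ) : ModuleCat ℤ :=
  ModuleCat.of ℤ (ZMod (if j = 1 then 1 else 0))

/-- The differentials of `D`: the only nonzero differentials are
`D_{2n+3} → D_{2n+2}`, given by multiplication by `n + 1`.
(The differential out of degree `m+3`, for `m` even, i.e. `m = 2n`, lands in degree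
`m + 2 = 2n + 2` and is multiplication by `m/2 + 1 = n + 1`.) -/
noncomputable def stmt8d : ∀ j : ℕ, stmt8X (j + 1) ⟶ stmt8X j
  | 0 => 0
  | 1 => 0
  | (m + 2) =>
      if m % 2 = 0 then
        ModuleCat.ofHom (((m / 2 + 1 : ℕ) : ℤ) • (LinearMap.id : ZMod 0 →ₗ[ℤ] ZMod 0))
      else 0

theorem stmt8_sq (j : ℕ) : stmt8d (j + 1) ≫ stmt8d j = 0 := by
  match j with
  | 0 => simp [stmt8d]
  | 1 => simp only [stmt8d]; exact Limits.comp_zero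
  | (m + 2) =>
    show stmt8d (m + 1 + 2) ≫ stmt8d (m + 2) = 0
    rcases Nat.even_or_odd m with h | h
    · have h0 := Nat.even_iff.mp h
      have e : stmt8d (m + 1 + 2) = 0 := by
        simp only [stmt8d]; exact if_neg (show ¬ (m + 1) % 2 = 0 by omega)
      rw [e]; exact Limits.zero_comp
    · have h1 := Nat.odd_iff.mp h
      have e : stmt8d (m + 2) = 0 := by
        simp only [stmt8d]; exact if_neg (show ¬ m % 2 = 0 by omega)
      rw [e]; exact Limits.comp_zero

/-- The chain complex `D`. -/
noncomputable def stmt8Complex : ChainComplex (ModuleCat ℤ) ℕ :=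
  ChainComplex.of stmt8X stmt8d stmt8_sq

noncomputable def coreEquiv (c : ℕ) :
    (ℤ ⧸ Submodule.span ℤ {(c : ℤ)}) ≃ₗ[ℤ] ZMod c :=
  (Int.quotientSpanNatEquivZMod c).toAddEquiv.toIntLinearEquiv

noncomputable def coreSC (c : ℕ) (X₃ : ModuleCat ℤ) : ShortComplex (ModuleCat ℤ) :=
  ShortComplex.mk (ModuleCat.ofHom ((c : ℤ) • (LinearMap.id : ℤ →ₗ[ℤ] ℤ)))
    (0 : ModuleCat.of ℤ ℤ ⟶ X₃) (comp_zero)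

noncomputable def coreIso (c : ℕ) (X₃ : ModuleCat ℤ) :
    (coreSC c X₃).homology ≅ ModuleCat.of ℤ (ZMod c) := by
  refine (coreSC c X₃).moduleCatHomologyIso ≪≫ LinearEquiv.toModuleIso ?_
  refine LinearEquiv.trans (Submodule.Quotient.equiv _ (Submodule.span ℤ {(c : ℤ)})
    (LinearEquiv.ofEq _ ⊤ (by ext x; exact ⟨fun _ => trivial, fun _ => rfl⟩) ≪≫ₗ
      Submodule.topEquiv) ?_) (coreEquiv c)
  · ext x
    simp only [Submodule.mem_map, LinearMap.mem_range, Submodule.mem_span_singleton]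
    constructor
    · rintro ⟨⟨y, hy⟩, ⟨z, hz⟩, rfl⟩
      refine ⟨(show ℤ from z), ?_⟩
      have h1 : ((c : ℤ) * (show ℤ from z) : ℤ) = (show ℤ from y) := congrArg Subtype.val hz
      show ((show ℤ from z) * (c : ℤ) : ℤ) = (show ℤ from y)
      rw [← h1]; ring
    · rintro ⟨z, rfl⟩
      refine ⟨(coreSC c X₃).moduleCatToCycles (show ℤ from z), ⟨z, rfl⟩, ?_⟩
      show ((c : ℤ) * (show ℤ from z) : ℤ) = ((show ℤ from z) * (c : ℤ) : ℤ)
      ring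

lemma stmt8d_odd (n : ℕ) : stmt8d (2 * n + 1) = 0 := by
  rcases n with _ | k
  · rfl
  · show stmt8d (2 * k + 1 + 2) = 0
    simp only [stmt8d]
    exact if_neg (by omega)

lemma stmt8d_even (n : ℕ) :
    stmt8d (2 * n + 2) =
      ModuleCat.ofHom (((n + 1 : ℕ) : ℤ) • (LinearMap.id : ZMod 0 →ₗ[ℤ] ZMod 0)) := by
  show (if (2 * n) % 2 = 0 then
        ModuleCat.ofHom ((((2 * n) / 2 + 1 : ℕ) : ℤ) • (LinearMap.id : ZMod 0 →ₗ[ℤ] ZMod 0))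
      else 0) = _
  rw [if_pos (by omega)]
  congr 2
  omega


theorem stmt8_homology :
    Nonempty (stmt8Complex.homology 0 ≅ ModuleCat.of ℤ ℤ) ∧
    (∀ m : ℕ, 1 ≤ m → Nonempty (stmt8Complex.homology (2 * m) ≅ ModuleCat.of ℤ (ZMod m))) ∧
    (∀ j : ℕ, Odd j → IsZero (stmt8Complex.homology j)) := by
  refine ⟨?_, ?_, ?_⟩
  · -- H_0 ≅ ℤ
    have hf : (stmt8Complex.sc' 1 0 0).f = 0 := by
      show stmt8Complex.d (0 + 1) 0 = 0
      rw [show stmt8Complex.d (0 + 1) 0 = stmt8d 0 from ChainComplex.of_d stmt8X stmt8d _]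
      rfl
    have hg : (stmt8Complex.sc' 1 0 0).g = 0 := by
      apply stmt8Complex.shape
      simp [ComplexShape.down]
    exact ⟨stmt8Complex.homologyIsoSc' 1 0 0 (ChainComplex.prev ℕ 0) ChainComplex.next_nat_zero
      ≪≫ (ShortComplex.HomologyData.ofZeros _ hf hg).left.homologyIso⟩
  · -- H_{2m} ≅ ZMod m
    intro m hm
    obtain ⟨n, rfl⟩ : ∃ n, m = n + 1 := ⟨m - 1, by omega⟩
    have e1 := stmt8Complex.homologyIsoSc' (2 * (n + 1) + 1) (2 * (n + 1)) (2 * n + 1)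
      (ChainComplex.prev ℕ _) (ChainComplex.next_nat_succ (2 * n + 1))
    have e2 : stmt8Complex.sc' (2 * (n + 1) + 1) (2 * (n + 1)) (2 * n + 1)
        ≅ coreSC (n + 1) (stmt8X (2 * n + 1)) := by
      refine ShortComplex.isoMk (Iso.refl _) (Iso.refl _) (Iso.refl _) ?_ ?_
      · show 𝟙 _ ≫ _ = stmt8Complex.d (2 * (n + 1) + 1) (2 * (n + 1)) ≫ 𝟙 _
        simp only [Category.id_comp, Category.comp_id]
        rw [show stmt8Complex.d (2 * (n + 1) + 1) (2 * (n + 1)) = stmt8d (2 * n + 2) from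
          ChainComplex.of_d stmt8X stmt8d _]
        rw [stmt8d_even]
        rfl
      · show 𝟙 _ ≫ _ = stmt8Complex.d (2 * (n + 1)) (2 * n + 1) ≫ 𝟙 _
        simp only [Category.id_comp, Category.comp_id]
        rw [show stmt8Complex.d (2 * (n + 1)) (2 * n + 1) = stmt8d (2 * n + 1) from
          ChainComplex.of_d stmt8X stmt8d _]
        rw [stmt8d_odd]
        rfl
    exact ⟨e1 ≪≫ ShortComplex.homologyMapIso e2 ≪≫ coreIso (n + 1) _⟩
  · -- odd degrees vanish
    intro j hj
    rw [← stmt8Complex.exactAt_iff_isZero_homology]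
    obtain ⟨k, rfl⟩ := hj
    rcases k with _ | n
    · -- j = 1
      show stmt8Complex.ExactAt 1
      rw [stmt8Complex.exactAt_iff' 2 1 0 (ChainComplex.prev ℕ _) (ChainComplex.next_nat_succ 0)]
      rw [ShortComplex.moduleCat_exact_iff]
      intro x _
      refine ⟨0, ?_⟩
      rw [map_zero]
      exact (@Subsingleton.elim (ZMod 1) (by infer_instance) _ _ : _ = x)
    · -- j = 2n+3
      show stmt8Complex.ExactAt (2 * n + 3)
      rw [stmt8Complex.exactAt_iff' (2 * n + 4) (2 * n + 3) (2 * n + 2)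
        (ChainComplex.prev ℕ _) (ChainComplex.next_nat_succ _)]
      rw [ShortComplex.moduleCat_exact_iff]
      intro x hx
      change stmt8Complex.d (2 * n + 3) (2 * n + 2) x = 0 at hx
      rw [show stmt8Complex.d (2 * n + 3) (2 * n + 2) = stmt8d (2 * n + 2) from
        ChainComplex.of_d stmt8X stmt8d _, stmt8d_even] at hx
      have hx' : ((n + 1 : ℕ) : ℤ) * (show ℤ from x) = 0 := hx
      have hx0 : (show ℤ from x) = 0 := by
        rcases mul_eq_zero.mp hx' with h | h
        · exfalso; omega
        · exact h
      exact ⟨0, by rw [map_zero]; exact hx0.symm⟩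
end
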